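/- Let F be a field and let A_xx : n×n, A_xv : n×v, A_zx : z×n, A_zv : z×v, C_x : p×n, C_v : p×v and Φ̄ : v×z be matrices over F. Let N_cx : n×k and N_cv : v×k be matrices such that the stacked (n+v)×k matrix [N_cx; N_cv] is of full column rank and the range of its associated linear map equals the kernel of the linear map associated with the p×(n+v) matrix [C_x C_v]. Then for every λ ∈ F, the (n+p+v)×(n+v) matrix M(λ) = [λ•1 − A_xx, −A_xv; −C_x, −C_v; −Φ̄*A_zx, 1 − Φ̄*A_zv] is of full column rank if and only if the (n+v)×k matrix Ψ(λ) = [λ•N_cx − (A_xx*N_cx + A_xv*N_cv); N_cv − Φ̄*(A_zx*N_cx + A_zv*N_cv)] is of full column rank. -/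

import Mathlib

open Matrix

/-- With `[N_cx; N_cv]` of full column rank and of range equal to the
kernel of `[C_x  C_v]`, for every `λ` the matrix `M(λ)` is of full column rank iff
`Ψ(λ)` is. -/
theorem stmt8 {F : Type*} [Field F] {n v z p k : ℕ}
    (Axx : Matrix (Fin n) (Fin n) F) (Axv : Matrix (Fin n) (Fin v) F)
    (Azx : Matrix (Fin z) (Fin n) F) (Azv : Matrix (Fin z) (Fin v) F)
    (Cx : Matrix (Fin p) (Fin n) F) (Cv : Matrix (Fin p) (Fin v) F)
    (Φ : Matrix (Fin v) (Fin z) F)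
    (Ncx : Matrix (Fin n) (Fin k) F) (Ncv : Matrix (Fin v) (Fin k) F)
    (hN : Function.Injective (Matrix.fromRows Ncx Ncv).mulVecLin)
    (hrange : LinearMap.range (Matrix.fromRows Ncx Ncv).mulVecLin =
        LinearMap.ker (Matrix.fromCols Cx Cv).mulVecLin) :
    ∀ l : F,
      Function.Injective (Matrix.fromRows (Matrix.fromRows
          (Matrix.fromCols (l • 1 - Axx) (-Axv))
          (Matrix.fromCols (-Cx) (-Cv)))
          (Matrix.fromCols (-(Φ * Azx)) (1 - Φ * Azv))).mulVecLin ↔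
      Function.Injective (Matrix.fromRows
          (l • Ncx - (Axx * Ncx + Axv * Ncv))
          (Ncv - Φ * (Azx * Ncx + Azv * Ncv))).mulVecLin := by
  intro l
  set M := Matrix.fromRows (Matrix.fromRows
          (Matrix.fromCols (l • 1 - Axx) (-Axv))
          (Matrix.fromCols (-Cx) (-Cv)))
          (Matrix.fromCols (-(Φ * Azx)) (1 - Φ * Azv)) with hM
  set Ψ := Matrix.fromRows
          (l • Ncx - (Axx * Ncx + Axv * Ncv))
          (Ncv - Φ * (Azx * Ncx + Azv * Ncv)) with hΨ
  -- key computation: for any u = Sum.elim x w,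
  have key : ∀ y : Fin k → F,
      M *ᵥ (Matrix.fromRows Ncx Ncv *ᵥ y) =
      Sum.elim (Sum.elim ((l • Ncx - (Axx * Ncx + Axv * Ncv)) *ᵥ y)
          (-(Matrix.fromCols Cx Cv *ᵥ (Matrix.fromRows Ncx Ncv *ᵥ y))))
          ((Ncv - Φ * (Azx * Ncx + Azv * Ncv)) *ᵥ y) := by
    intro y
    funext i
    rcases i with (i | i) | i <;>
      simp [hM, Matrix.fromRows_mulVec, Matrix.fromCols_mulVec_sumElim,
        Matrix.fromBlocks_mulVec, Matrix.sub_mulVec, Matrix.add_mulVec, Matrix.neg_mulVec,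
        Matrix.smul_mulVec, Matrix.mulVec_mulVec, Matrix.one_mulVec,
        Matrix.mul_assoc, Matrix.mul_add, Matrix.mul_sub, Matrix.sub_mul,
        Matrix.add_mul, Matrix.one_mul] <;> ring
  have hkerN : ∀ y : Fin k → F,
      Matrix.fromCols Cx Cv *ᵥ (Matrix.fromRows Ncx Ncv *ᵥ y) = 0 := by
    intro y
    have : (Matrix.fromRows Ncx Ncv).mulVecLin y ∈
        LinearMap.ker (Matrix.fromCols Cx Cv).mulVecLin := by
      rw [← hrange]; exact ⟨y, rfl⟩
    simpa [Matrix.mulVecLin_apply] using this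
  constructor
  · intro hMinj
    rw [injective_iff_map_eq_zero] at hMinj ⊢
    intro y hy
    have h0 : M *ᵥ (Matrix.fromRows Ncx Ncv *ᵥ y) = 0 := by
      rw [key y, hkerN y]
      have h1 : (l • Ncx - (Axx * Ncx + Axv * Ncv)) *ᵥ y = 0 := by
        funext i
        simpa [hΨ, Matrix.mulVecLin_apply, Matrix.fromRows_mulVec] using
          congrFun hy (Sum.inl i)
      have h2 : (Ncv - Φ * (Azx * Ncx + Azv * Ncv)) *ᵥ y = 0 := by
        funext i
        simpa [hΨ, Matrix.mulVecLin_apply, Matrix.fromRows_mulVec] using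
          congrFun hy (Sum.inr i)
      rw [h1, h2]
      funext i; rcases i with (i | i) | i <;> simp
    have hNy : Matrix.fromRows Ncx Ncv *ᵥ y = 0 := by
      have := hMinj (Matrix.fromRows Ncx Ncv *ᵥ y) (by simpa [Matrix.mulVecLin_apply] using h0)
      simpa using this
    exact hN (by simpa [Matrix.mulVecLin_apply] using hNy : (Matrix.fromRows Ncx Ncv).mulVecLin y = (Matrix.fromRows Ncx Ncv).mulVecLin 0)
  · intro hΨinj
    rw [injective_iff_map_eq_zero] at hΨinj ⊢
    intro u hu
    -- second block gives u ∈ ker fromColumns Cx Cv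
    have hCu : Matrix.fromCols Cx Cv *ᵥ u = 0 := by
      funext i
      have := congrFun hu (Sum.inl (Sum.inr i))
      simp only [hM, Matrix.mulVecLin_apply, Matrix.fromRows_mulVec, Sum.elim_inl,
        Sum.elim_inr, Pi.zero_apply] at this
      have hu' : u = Sum.elim (fun j => u (Sum.inl j)) (fun j => u (Sum.inr j)) := by
        funext j; rcases j with j | j <;> rfl
      rw [hu']
      simp only [Matrix.fromCols_mulVec_sumElim]
      have : (Matrix.fromCols (-Cx) (-Cv) *ᵥ u) i = 0 := this
      rw [hu'] at this
      simp only [Matrix.fromCols_mulVec_sumElim, Matrix.neg_mulVec] at this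
      have h2 : -((Cx *ᵥ fun j => u (Sum.inl j)) i + (Cv *ᵥ fun j => u (Sum.inr j)) i) = 0 := by
        rw [neg_add]; simpa using this
      simpa using neg_eq_zero.mp h2
    obtain ⟨y, hy⟩ : ∃ y, Matrix.fromRows Ncx Ncv *ᵥ y = u := by
      have : u ∈ LinearMap.range (Matrix.fromRows Ncx Ncv).mulVecLin := by
        rw [hrange]
        simpa [Matrix.mulVecLin_apply] using hCu
      obtain ⟨y, hy⟩ := this
      exact ⟨y, by simpa [Matrix.mulVecLin_apply] using hy⟩
    have hΨy : Ψ.mulVecLin y = 0 := by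
      have h0 : M *ᵥ u = 0 := by simpa [Matrix.mulVecLin_apply] using hu
      rw [← hy] at h0
      rw [key y, hkerN y] at h0
      funext i
      rcases i with i | i
      · simpa [hΨ, Matrix.mulVecLin_apply, Matrix.fromRows_mulVec] using
          congrFun h0 (Sum.inl (Sum.inl i))
      · simpa [hΨ, Matrix.mulVecLin_apply, Matrix.fromRows_mulVec] using
          congrFun h0 (Sum.inr i)
    have : y = 0 := hΨinj y hΨy
    rw [← hy, this]
    simp
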